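/- For every lambda term M in β-normal form and every normal context C[·], the reduction sequence starting from ⟨C[·], M•⟩ in Λ^rb terminates in the atom ⌈C[M]⌉ (up to α-equivalence). -/

import Mathlib

/-- Lambda terms, extended with "atoms" `⌈M⌉` that wrap a term. -/
inductive Tm : Type
  | var : String → Tm
  | app : Tm → Tm → Tm
  | lam : String → Tm → Tm
  | atom : Tm → Tm
deriving DecidableEq

namespace Tm

/-- A pure lambda term (an element of Λ): contains no atoms. -/
def Pure : Tm → Prop
  | var _ => True
  | app a b => Pure a ∧ Pure b
  | lam _ m => Pure m
  | atom _ => False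

/-- Free variables; atoms have no free variables. -/
def FV : Tm → Finset String
  | var x => {x}
  | app a b => FV a ∪ FV b
  | lam x m => FV m \ {x}
  | atom _ => ∅

/-- Substitution; atoms are unaffected. -/
def subst : Tm → String → Tm → Tm
  | var y, x, N => if y = x then N else var y
  | app a b, x, N => app (a.subst x N) (b.subst x N)
  | lam y m, x, N => if y = x then lam y m else lam y (m.subst x N)
  | atom m, _, _ => atom m

/-- `apps M [N₁,…,Nₙ] = M N₁ ⋯ Nₙ`. -/
def apps (M : Tm) (Ns : List Tm) : Tm := Ns.foldl app M

/-- Replace each free variable `x` (not in the bound list) by the atom `⌈x⌉`. -/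
def bulletAux : List String → Tm → Tm
  | bs, var x => if x ∈ bs then var x else atom (var x)
  | bs, app a b => app (bulletAux bs a) (bulletAux bs b)
  | bs, lam x m => lam x (bulletAux (x :: bs) m)
  | _, atom m => atom m

/-- `M•`: replace each free variable `x` of `M` by the atom `⌈x⌉`. -/
def bullet (M : Tm) : Tm := bulletAux [] M

/-- Read-back `RB : Λ• → Λ`: `RB (M N) = RB M (RB N)`,
`RB (λx.M) = λx.RB (M[x:=⌈x⌉])`, `RB ⌈M⌉ = M` (stated structurally,
which agrees with the above since `RB (M[x:=⌈x⌉]) = RB M` here). -/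
def RB : Tm → Tm
  | var x => var x
  | app a b => app (RB a) (RB b)
  | lam x m => lam x (RB m)
  | atom m => m

end Tm

/-- Membership in Λ• = { M• | M ∈ Λ }. -/
def IsBullet (M : Tm) : Prop := ∃ P : Tm, P.Pure ∧ M = P.bullet

/-- One-step β-reduction (atoms are inert). -/
inductive Beta : Tm → Tm → Prop
  | beta (x M N) : Beta (.app (.lam x M) N) (M.subst x N)
  | appL {M M'} (N) : Beta M M' → Beta (.app M N) (.app M' N)
  | appR (M) {N N'} : Beta N N' → Beta (.app M N) (.app M N')
  | lam (x) {M M'} : Beta M M' → Beta (.lam x M) (.lam x M')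

/-- β-normal form. -/
def NF (M : Tm) : Prop := ∀ N, ¬ Beta M N

/-- One-hole contexts. -/
inductive Ctx : Type
  | hole
  | appL : Ctx → Tm → Ctx
  | appR : Tm → Ctx → Ctx
  | lam : String → Ctx → Ctx

namespace Ctx

/-- `C[M]`: fill the hole of `C` with `M`. -/
def fill : Ctx → Tm → Tm
  | hole, M => M
  | appL C N, M => .app (C.fill M) N
  | appR N C, M => .app N (C.fill M)
  | lam x C, M => .lam x (C.fill M)

/-- Composition of contexts: `(C.comp D)[M] = C[D[M]]`. -/
def comp : Ctx → Ctx → Ctx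
  | hole, D => D
  | appL C N, D => appL (C.comp D) N
  | appR N C, D => appR N (C.comp D)
  | lam x C, D => lam x (C.comp D)

/-- A context over pure lambda terms. -/
def Pure : Ctx → Prop
  | hole => True
  | appL C N => C.Pure ∧ N.Pure
  | appR N C => N.Pure ∧ C.Pure
  | lam _ C => C.Pure

end Ctx

/-- A context is normal iff it maps β-normal forms to β-normal forms. -/
def NormalCtx (C : Ctx) : Prop := ∀ M, NF M → NF (C.fill M)

/-- The set Λ^rb: atoms `⌈M⌉`; pairs `⟨C[·], M⟩` with `M ∈ Λ•`
(applications `M ⃗N` with head in `Λ•` are encoded inside the `Tm`);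
and `⟨C[·], M ⃗N⟩` with `M ∈ Λ^rb`, `⃗N ∈ Λ•`. -/
inductive Rb : Type
  | atom : Tm → Rb
  | pair : Ctx → Tm → Rb
  | papp : Ctx → Rb → List Tm → Rb

namespace Rb

/-- Well-formedness: side conditions of membership in Λ^rb. -/
def WF : Rb → Prop
  | atom M => M.Pure
  | pair C M => C.Pure ∧ IsBullet M
  | papp C M Ns => C.Pure ∧ M.WF ∧ ∀ N ∈ Ns, IsBullet N

/-- Read-back on Λ^rb. -/
def rb : Rb → Tm
  | atom M => M
  | pair C M => C.fill M.RB
  | papp C M Ns => C.fill (Tm.apps M.rb (Ns.map Tm.RB))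

end Rb

/-- The reduction relation on Λ^rb (Definition 4 of the paper). -/
inductive Step : Rb → Rb → Prop
  | collapse (C M) : Step (.pair C (.atom M)) (.atom (C.fill M))
  | lam (C x M) :
      Step (.pair C (.lam x M))
        (.pair (C.comp (.lam x .hole)) (M.subst x (.atom (.var x))))
  | split (C M N₀ Ns) :
      Step (.pair C (Tm.apps (.atom M) (N₀ :: Ns)))
        (.papp C (.pair (.appR M .hole) N₀) Ns)
  | beta (C x M N₀ Ns) :
      Step (.pair C (Tm.apps (.lam x M) (N₀ :: Ns)))
        (.pair C (Tm.apps (M.subst x N₀) Ns))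
  | collapseNil (C M) : Step (.papp C (.atom M) []) (.atom (C.fill M))
  | splitCons (C M N₀ Ns) :
      Step (.papp C (.atom M) (N₀ :: Ns)) (.papp C (.pair (.appR M .hole) N₀) Ns)
  | cong (C Ns) {M M'} : Step M M' → Step (.papp C M Ns) (.papp C M' Ns)

/-- The steps of `Step` that contract a β-redex (rule 4, possibly under head congruence). -/
inductive BStep : Rb → Rb → Prop
  | beta (C x M N₀ Ns) :
      BStep (.pair C (Tm.apps (.lam x M) (N₀ :: Ns)))
        (.pair C (Tm.apps (M.subst x N₀) Ns))
  | cong (C Ns) {M M'} : BStep M M' → BStep (.papp C M Ns) (.papp C M' Ns)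

/-- Contraction of the leftmost β-redex. -/
inductive Leftmost : Tm → Tm → Prop
  | beta (x M N) : Leftmost (.app (.lam x M) N) (M.subst x N)
  | lam (x) {M M'} : Leftmost M M' → Leftmost (.lam x M) (.lam x M')
  | appL {M M'} (N) : (∀ x M₀, M ≠ Tm.lam x M₀) → Leftmost M M' →
      Leftmost (.app M N) (.app M' N)
  | appR (M) {N N'} : NF M → (∀ x M₀, M ≠ Tm.lam x M₀) → Leftmost N N' →
      Leftmost (.app M N) (.app M N')
/-! ### Auxiliary lemmas -/

namespace Aux

open Tm

/-- Size measure for strong induction. -/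
def tsize : Tm → Nat
  | .var _ => 1
  | .app a b => tsize a + tsize b + 1
  | .lam _ m => tsize m + 1
  | .atom m => tsize m + 1

lemma tsize_pos (M : Tm) : 0 < tsize M := by
  cases M <;> simp [tsize] <;> omega

lemma bulletAux_congr (M : Tm) : ∀ bs bs' : List String,
    (∀ y, y ∈ bs ↔ y ∈ bs') → Tm.bulletAux bs M = Tm.bulletAux bs' M := by
  induction M with
  | var x =>
    intro bs bs' h
    simp only [Tm.bulletAux]
    by_cases hx : x ∈ bs
    · rw [if_pos hx, if_pos ((h x).1 hx)]
    · rw [if_neg hx, if_neg (fun hx' => hx ((h x).2 hx'))]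
  | app a b iha ihb => intro bs bs' h; simp [Tm.bulletAux, iha bs bs' h, ihb bs bs' h]
  | lam x m ihm =>
    intro bs bs' h
    simp only [Tm.bulletAux]
    rw [ihm (x :: bs) (x :: bs') (by intro y; simp [h y])]
  | atom m => intro _ _ _; rfl

lemma bulletAux_subst (M : Tm) : ∀ bs : List String, ∀ x, x ∉ bs →
    (Tm.bulletAux (x :: bs) M).subst x (.atom (.var x)) = Tm.bulletAux bs M := by
  induction M with
  | var y =>
    intro bs x hx
    simp only [Tm.bulletAux]
    by_cases hy : y ∈ x :: bs
    · rw [if_pos hy]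
      rcases List.mem_cons.1 hy with h | h
      · subst h; simp [Tm.subst, if_neg hx]
      · have hne : y ≠ x := by rintro rfl; exact hx h
        simp [Tm.subst, hne, if_pos h]
    · have h1 : y ∉ bs := fun h => hy (List.mem_cons_of_mem _ h)
      rw [if_neg hy, if_neg h1]; rfl
  | app a b iha ihb =>
    intro bs x hx
    simp only [Tm.bulletAux, Tm.subst, iha bs x hx, ihb bs x hx]
  | lam y m ihm =>
    intro bs x hx
    simp only [Tm.bulletAux, Tm.subst]
    by_cases hyx : y = x
    · subst hyx
      rw [if_pos rfl]
      rw [bulletAux_congr m (y :: y :: bs) (y :: bs) (by intro z; simp)]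
    · rw [if_neg hyx]
      rw [bulletAux_congr m (y :: x :: bs) (x :: y :: bs)
        (by intro z; simp; tauto)]
      rw [ihm (y :: bs) x (by simp [hx, Ne.symm hyx])]
  | atom m => intro _ _ _; rfl

lemma apps_append (M : Tm) (L : List Tm) (N : Tm) :
    Tm.apps M (L ++ [N]) = .app (Tm.apps M L) N := by
  simp [Tm.apps]

lemma bullet_apps (H : Tm) (L : List Tm) :
    (Tm.apps H L).bullet = Tm.apps H.bullet (L.map Tm.bullet) := by
  induction L generalizing H with
  | nil => rfl
  | cons a l ih =>
    show (Tm.apps (.app H a) l).bullet = _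
    rw [ih (.app H a)]; rfl

lemma tsize_le_apps (H : Tm) (L : List Tm) : tsize H ≤ tsize (Tm.apps H L) := by
  induction L generalizing H with
  | nil => exact le_refl _
  | cons a l ih =>
    calc tsize H ≤ tsize (Tm.app H a) := by simp [tsize]; omega
    _ ≤ _ := ih (.app H a)

lemma tsize_mem_lt {N : Tm} {L : List Tm} (H : Tm) (h : N ∈ L) :
    tsize N < tsize (Tm.apps H L) := by
  induction L generalizing H with
  | nil => cases h
  | cons a l ih =>
    rcases List.mem_cons.1 h with rfl | h
    · calc tsize N < tsize (Tm.app H N) := by simp [tsize]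
      _ ≤ _ := tsize_le_apps (.app H N) l
    · exact ih (.app H a) h

lemma NF_appL {a b : Tm} (h : NF (.app a b)) : NF a :=
  fun a' ha => h _ (Beta.appL b ha)

lemma NF_appR {a b : Tm} (h : NF (.app a b)) : NF b :=
  fun b' hb => h _ (Beta.appR a hb)

lemma NF_lam {x : String} {m : Tm} (h : NF (.lam x m)) : NF m :=
  fun m' hm => h _ (Beta.lam x hm)

/-- β-normal pure terms are λ-abstractions or variable-headed spines. -/
lemma spine : ∀ M : Tm, M.Pure → NF M →
    (∃ x m, M = .lam x m) ∨
    ∃ x L, M = Tm.apps (.var x) L ∧ ∀ N ∈ L, N.Pure ∧ NF N := by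
  intro M
  induction M with
  | var x => intro _ _; exact Or.inr ⟨x, [], rfl, by simp⟩
  | lam x m ihm => intro _ _; exact Or.inl ⟨x, m, rfl⟩
  | atom m => intro hp; exact absurd hp not_false
  | app a b iha ihb =>
    intro hp hnf
    rcases iha hp.1 (NF_appL hnf) with ⟨x, m, rfl⟩ | ⟨x, L, rfl, hL⟩
    · exact absurd (Beta.beta x m b) (hnf _)
    · refine Or.inr ⟨x, L ++ [b], ?_, ?_⟩
      · rw [apps_append]
      · intro N hN
        rcases List.mem_append.1 hN with h | h
        · exact hL N h
        · simp at h; subst h; exact ⟨hp.2, NF_appR hnf⟩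

lemma fill_comp (C D : Ctx) (M : Tm) : (C.comp D).fill M = C.fill (D.fill M) := by
  induction C with
  | hole => rfl
  | appL C N ih => simp [Ctx.comp, Ctx.fill, ih]
  | appR N C ih => simp [Ctx.comp, Ctx.fill, ih]
  | lam x C ih => simp [Ctx.comp, Ctx.fill, ih]

lemma lift_papp (C : Ctx) (L : List Tm) {a b : Rb}
    (h : Relation.ReflTransGen Step a b) :
    Relation.ReflTransGen Step (Rb.papp C a L) (Rb.papp C b L) :=
  Relation.ReflTransGen.lift (fun r => Rb.papp C r L) (fun _ _ h => Step.cong C L h) _ _ h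

lemma run_papp (Ns : List Tm)
    (h : ∀ N ∈ Ns, ∀ C' : Ctx,
      Relation.ReflTransGen Step (Rb.pair C' N.bullet) (Rb.atom (C'.fill N))) :
    ∀ P C, Relation.ReflTransGen Step (Rb.papp C (.atom P) (Ns.map Tm.bullet))
      (Rb.atom (C.fill (Tm.apps P Ns))) := by
  induction Ns with
  | nil => intro P C; exact Relation.ReflTransGen.single (Step.collapseNil C P)
  | cons N0 rest ih =>
    intro P C
    refine Relation.ReflTransGen.head (Step.splitCons C P N0.bullet (rest.map Tm.bullet)) ?_
    refine Relation.ReflTransGen.trans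
      (lift_papp C (rest.map Tm.bullet) (h N0 (by simp) (Ctx.appR P .hole))) ?_
    exact ih (fun N hN C' => h N (by simp [hN]) C') (.app P N0) C

lemma run : ∀ n (M : Tm), tsize M ≤ n → M.Pure → NF M → ∀ C : Ctx,
    Relation.ReflTransGen Step (Rb.pair C M.bullet) (Rb.atom (C.fill M)) := by
  intro n
  induction n with
  | zero => intro M hs; exact absurd hs (by have := tsize_pos M; omega)
  | succ n ih =>
    intro M hs hp hnf C
    rcases spine M hp hnf with ⟨x, m, rfl⟩ | ⟨x, L, rfl, hL⟩
    · -- lambda case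
      have hstep : Step (Rb.pair C (Tm.lam x m).bullet)
          (Rb.pair (C.comp (.lam x .hole)) ((Tm.bulletAux [x] m).subst x (.atom (.var x)))) :=
        Step.lam C x (Tm.bulletAux [x] m)
      rw [bulletAux_subst m [] x (by simp)] at hstep
      refine Relation.ReflTransGen.head hstep ?_
      have := ih m (by simp [tsize] at hs ⊢; omega) hp (NF_lam hnf) (C.comp (.lam x .hole))
      rwa [fill_comp] at this
    · cases L with
      | nil =>
        exact Relation.ReflTransGen.single (Step.collapse C (.var x))
      | cons N0 rest =>
        have hb : (Tm.apps (.var x) (N0 :: rest)).bullet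
            = Tm.apps (.atom (.var x)) (N0.bullet :: rest.map Tm.bullet) := by
          rw [bullet_apps]; rfl
        rw [hb]
        refine Relation.ReflTransGen.head
          (Step.split C (.var x) N0.bullet (rest.map Tm.bullet)) ?_
        have hN0 := hL N0 (by simp)
        have hrun0 := ih N0
          (by have := tsize_mem_lt (N := N0) (L := N0 :: rest) (Tm.var x) (by simp); omega)
          hN0.1 hN0.2 (Ctx.appR (.var x) .hole)
        refine Relation.ReflTransGen.trans (lift_papp C (rest.map Tm.bullet) hrun0) ?_
        exact run_papp rest
          (fun N hN C' => by
            have hN' := hL N (by simp [hN])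
            exact ih N
              (by have := tsize_mem_lt (N := N) (L := N0 :: rest) (Tm.var x) (by simp [hN]); omega)
              hN'.1 hN'.2 C')
          (.app (.var x) N0) C

end Aux

/-- For β-normal `M` and normal `C`, the sequence from `⟨C[·], M•⟩` ends in `⌈C[M]⌉`. -/
theorem normal_term_readback (C : Ctx) (M : Tm)
    (hC : NormalCtx C) (hCp : C.Pure) (hM : M.Pure) (hnf : NF M) :
    Relation.ReflTransGen Step (Rb.pair C M.bullet) (Rb.atom (C.fill M)) :=
  Aux.run (Aux.tsize M) M le_rfl hM hnf C
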